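/- Let G be a group with a normal subgroup N such that the quotient G/N is virtually abelian and the centralizer C_G(N) of N in G has finite index in G. Then G is virtually 2-nilpotent, i.e., G has a finite-index subgroup H whose commutator subgroup [H,H] is contained in the center of H. -/

import Mathlib

open scoped commutatorElement

/-- **Lemma.** If `1 → N → G → K → 1` is an extension with `K = G/N` virtually abelian
and the centralizer `C_G(N)` of finite index in `G`, then `G` is virtually 2-nilpotent:
it has a finite-index subgroup `H` whose commutator subgroup is contained in its
center. -/
theorem virtually_two_nilpotent_of_extension {G : Type*} [Group G]
    (N : Subgroup G) [N.Normal]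
    (hK : ∃ K : Subgroup (G ⧸ N), K.FiniteIndex ∧ ∀ a ∈ K, ∀ b ∈ K, a * b = b * a)
    (hC : (Subgroup.centralizer (N : Set G)).FiniteIndex) :
    ∃ H : Subgroup G, H.FiniteIndex ∧
      ∀ a ∈ H, ∀ b ∈ H, ∀ c ∈ H, ⁅a, b⁆ * c = c * ⁅a, b⁆ := by
  obtain ⟨K, hKfi, hKab⟩ := hK
  refine ⟨(Subgroup.centralizer (N : Set G)) ⊓ K.comap (QuotientGroup.mk' N), ?_, ?_⟩
  · haveI : (K.comap (QuotientGroup.mk' N)).FiniteIndex := by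
      constructor
      rw [Subgroup.index_comap_of_surjective K (QuotientGroup.mk'_surjective N)]
      exact hKfi.index_ne_zero
    exact inferInstance
  · rintro a ⟨haC, haK⟩ b ⟨hbC, hbK⟩ c ⟨hcC, hcK⟩
    have hcomm : ⁅a, b⁆ ∈ N := by
      have : (QuotientGroup.mk' N) ⁅a, b⁆ = 1 := by
        simp only [map_commutatorElement]
        rw [commutatorElement_eq_one_iff_mul_comm]
        exact hKab _ haK _ hbK
      exact (QuotientGroup.eq_one_iff _).mp this
    exact Subgroup.mem_centralizer_iff.mp hcC ⁅a, b⁆ hcomm
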